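/- For nonnegative integers α ≥ 1, det[y^{i-1} d^{j-2}/dx^{j-2} x^{i-1}]_{i=1..α+1; j=2..α+1} = (∏_{i=1}^{α-1} i!) · (x-y)^α, where the first column is (1, y, y², ..., y^α)ᵀ and column j (for j = 2,...,α+1) is the (j-2)-th derivative in x of (1, x, x², ..., x^α)ᵀ. -/

import Mathlib

open Finset

private lemma iterDeriv_pow (k n : ℕ) :
    iteratedDeriv k (fun t : ℝ => t ^ n) =
      fun x : ℝ => (n.descFactorial k : ℝ) * x ^ (n - k) := by
  induction k with
  | zero => simp
  | succ k ih =>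
    rw [iteratedDeriv_succ, ih]
    funext x
    rw [deriv_const_mul_field, deriv_pow_field]
    have h1 : n.descFactorial (k + 1) = (n - k) * n.descFactorial k :=
      Nat.descFactorial_succ n k
    have h2 : n - (k + 1) = n - k - 1 := by omega
    rw [h1, h2]
    push_cast
    ring

/-- The confluent Vandermonde matrix with nodes `y` (multiplicity 1) and `x`
(multiplicity `n`). -/
private def Vm (x y : ℝ) (n : ℕ) : Matrix (Fin (n + 1)) (Fin (n + 1)) ℝ :=
  Matrix.of fun i j => if (j : ℕ) = 0 then y ^ (i : ℕ)
    else (Nat.descFactorial (i : ℕ) ((j : ℕ) - 1) : ℝ) * x ^ ((i : ℕ) - ((j : ℕ) - 1))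

private lemma detVm (x y : ℝ) : ∀ n : ℕ,
    (Vm x y n).det = (∏ i ∈ Finset.range n, (i.factorial : ℝ)) * (x - y) ^ n := by
  intro n
  induction n with
  | zero =>
    simp [Vm, Matrix.det_fin_one]
  | succ n ih =>
    -- the row operation matrix E : row i ← row i - x * row (i-1)
    set E : Matrix (Fin (n + 2)) (Fin (n + 2)) ℝ :=
      Matrix.of fun i j =>
        (if j = i then (1 : ℝ) else 0) +
          (if (i : ℕ) = (j : ℕ) + 1 then -x else 0) with hE
    have hEdet : E.det = 1 := by
      rw [Matrix.det_of_lowerTriangular E]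
      · apply Finset.prod_eq_one
        intro i _
        simp [hE]
      · intro i j hij
        have hij' : (i : ℕ) < (j : ℕ) := hij
        have h1 : j ≠ i := by
          intro h; subst h; exact lt_irrefl _ hij'
        have h2 : (i : ℕ) ≠ (j : ℕ) + 1 := by omega
        simp [hE, h1, h2]
    set V := Vm x y (n + 1) with hV
    set N := E * V with hN
    have hNdet : N.det = V.det := by
      rw [hN, Matrix.det_mul, hEdet, one_mul]
    -- entries of N
    have hmul0 : ∀ j, N 0 j = V 0 j := by
      intro j
      rw [hN, Matrix.mul_apply]
      rw [Fintype.sum_eq_single (0 : Fin (n + 2))]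
      · simp [hE]
      · intro k hk
        have h2 : ¬((0 : ℕ) = (k : ℕ) + 1) := by omega
        simp [hE, hk, Fin.val_zero, h2]
    have hmulS : ∀ (i : Fin (n + 1)) (j : Fin (n + 2)),
        N i.succ j = V i.succ j - x * V i.castSucc j := by
      intro i j
      rw [hN, Matrix.mul_apply]
      have key : ∀ k : Fin (n + 2), E i.succ k * V k j =
          (if k = i.succ then (1 : ℝ) else 0) * V k j +
            (if k = i.castSucc then -x else 0) * V k j := by
        intro k
        have hiff : ((i.succ : Fin (n + 2)) : ℕ) = (k : ℕ) + 1 ↔ k = i.castSucc := by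
          rw [Fin.ext_iff]
          simp only [Fin.val_succ, Fin.coe_castSucc]
          omega
        simp only [hE, Matrix.of_apply, add_mul]
        congr 1
        by_cases h : k = i.castSucc
        · rw [if_pos h, if_pos (hiff.mpr h)]
        · rw [if_neg h, if_neg (fun hh => h (hiff.mp hh))]
      rw [Finset.sum_congr rfl (fun k _ => key k), Finset.sum_add_distrib]
      simp only [ite_mul, one_mul, zero_mul]
      rw [Finset.sum_ite_eq' Finset.univ i.succ (fun k => V k j),
        Finset.sum_ite_eq' Finset.univ i.castSucc (fun k => -x * V k j)]
      simp only [Finset.mem_univ, if_true]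
      ring
    -- column 1 of N is the first standard basis vector
    have hcol : ∀ i : Fin (n + 2), N i 1 = if i = 0 then 1 else 0 := by
      intro i
      induction i using Fin.cases with
      | zero =>
        rw [hmul0]
        simp [hV, Vm]
      | succ i =>
        rw [hmulS]
        have h1 : ((1 : Fin (n + 2)) : ℕ) = 1 := rfl
        have hne : ¬((Fin.succ i : Fin (n + 2)) = 0) := Fin.succ_ne_zero i
        rw [if_neg hne]
        simp only [hV, Vm, Matrix.of_apply, h1, if_neg one_ne_zero]
        have hv3 : ((Fin.succ i : Fin (n + 2)) : ℕ) = (i : ℕ) + 1 := rfl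
        have hv4 : ((Fin.castSucc i : Fin (n + 2)) : ℕ) = (i : ℕ) := rfl
        rw [hv3, hv4]
        simp only [Nat.sub_self, Nat.sub_zero, Nat.descFactorial_zero, Nat.cast_one, one_mul]
        rw [pow_succ]
        ring
    -- expand along column 1
    rw [← hNdet, Matrix.det_succ_column N 1]
    rw [Fintype.sum_eq_single (0 : Fin (n + 2))]
    swap
    · intro k hk
      rw [hcol k, if_neg hk]
      ring
    rw [hcol 0, if_pos rfl]
    -- identify the submatrix
    have hsub : (N.submatrix (Fin.succAbove 0) (Fin.succAbove 1)) =
        Matrix.of (fun k l : Fin (n + 1) =>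
          (if (l : ℕ) = 0 then y - x else ((l : ℕ) : ℝ)) * Vm x y n k l) := by
      ext k l
      rw [Matrix.submatrix_apply, Fin.zero_succAbove]
      induction l using Fin.cases with
      | zero =>
        rw [Fin.one_succAbove_zero, hmulS]
        have h0 : (((0 : Fin (n + 2))) : ℕ) = 0 := rfl
        have h0' : (((0 : Fin (n + 1))) : ℕ) = 0 := rfl
        simp only [hV, Vm, Matrix.of_apply, h0, h0', if_pos rfl, eq_self_iff_true, if_true]
        have hv3 : ((Fin.succ k : Fin (n + 2)) : ℕ) = (k : ℕ) + 1 := rfl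
        have hv4 : ((Fin.castSucc k : Fin (n + 2)) : ℕ) = (k : ℕ) := rfl
        rw [hv3, hv4, pow_succ]
        ring
      | succ m =>
        rw [Fin.one_succAbove_succ, hmulS]
        have hv1 : (((m.succ.succ : Fin (n + 2))) : ℕ) = (m : ℕ) + 2 := rfl
        have hv2 : ((m.succ : Fin (n + 1)) : ℕ) = (m : ℕ) + 1 := rfl
        have hv3 : ((Fin.succ k : Fin (n + 2)) : ℕ) = (k : ℕ) + 1 := rfl
        have hv4 : ((Fin.castSucc k : Fin (n + 2)) : ℕ) = (k : ℕ) := rfl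
        simp only [hV, Vm, Matrix.of_apply, hv1, hv2, hv3, hv4,
          show (m : ℕ) + 2 - 1 = (m : ℕ) + 1 from rfl,
          show (m : ℕ) + 1 - 1 = (m : ℕ) from rfl]
        rw [if_neg (by omega : ¬((m : ℕ) + 2 = 0)),
          if_neg (by omega : ¬((m : ℕ) + 1 = 0))]
        rcases lt_or_ge (k : ℕ) ((m : ℕ) + 1) with hk | hk
        · have h0 : Nat.descFactorial (k : ℕ) ((m : ℕ) + 1) = 0 :=
            Nat.descFactorial_eq_zero_iff_lt.mpr hk
          have e1 : (k : ℕ) + 1 - ((m : ℕ) + 1) = 0 := by omega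
          have e3 : (k : ℕ) - (m : ℕ) = 0 := by omega
          have key : ((k : ℕ) + 1) * Nat.descFactorial (k : ℕ) (m : ℕ) =
              ((m : ℕ) + 1) * Nat.descFactorial (k : ℕ) (m : ℕ) := by
            rcases eq_or_lt_of_le (Nat.lt_succ_iff.mp hk) with hkm | hkm
            · rw [hkm]
            · rw [Nat.descFactorial_eq_zero_iff_lt.mpr hkm]; ring
          rw [Nat.succ_descFactorial_succ, h0, e1, e3, key]
          push_cast
          ring
        · have h1 : (k : ℕ) + 1 - ((m : ℕ) + 1) = (k : ℕ) - (m : ℕ) := by omega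
          have h2 : (k : ℕ) - ((m : ℕ) + 1) + 1 = (k : ℕ) - (m : ℕ) := by omega
          rw [Nat.succ_descFactorial_succ, Nat.descFactorial_succ, h1]
          have h3 : x ^ ((k : ℕ) - ((m : ℕ) + 1)) * x = x ^ ((k : ℕ) - (m : ℕ)) := by
            rw [← pow_succ, h2]
          have h4 : (((k : ℕ) - (m : ℕ) : ℕ) : ℝ) = ((k : ℕ) : ℝ) - ((m : ℕ) : ℝ) :=
            Nat.cast_sub (by omega)
          push_cast [h4]
          linear_combination (((m : ℕ) : ℝ) - ((k : ℕ) : ℝ)) *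
            (Nat.descFactorial (k : ℕ) (m : ℕ) : ℝ) * h3
    rw [hsub, Matrix.det_mul_row, ih]
    have hprod : (∏ l : Fin (n + 1), (if (l : ℕ) = 0 then y - x else ((l : ℕ) : ℝ))) =
        (y - x) * (n.factorial : ℝ) := by
      rw [Fin.prod_univ_eq_prod_range (fun m => if m = 0 then y - x else ((m : ℕ) : ℝ)) (n + 1)]
      rw [Finset.prod_range_succ']
      simp only [Nat.succ_ne_zero, if_false, if_pos rfl, Nat.add_eq, Nat.add_zero]
      rw [mul_comm]
      congr 1
      have : ∏ i ∈ Finset.range n, (((i + 1 : ℕ)) : ℝ) = ((n.factorial : ℕ) : ℝ) := by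
        rw [← Nat.cast_prod, Finset.prod_range_add_one_eq_factorial]
      rw [← this]
    rw [hprod, Finset.prod_range_succ]
    have hval1 : (((1 : Fin (n + 2))) : ℕ) = 1 := rfl
    have hval0 : (((0 : Fin (n + 2))) : ℕ) = 0 := rfl
    rw [hval0, hval1]
    push_cast
    ring

/-- Confluent Vandermonde determinant: first column `(1,y,...,y^α)ᵀ`, column `j ≥ 2`
the `(j-2)`-th `x`-derivative of `(1,x,...,x^α)ᵀ`; its determinant equals
`(∏_{i=1}^{α-1} i!) (x-y)^α`. -/
theorem stmt_12 (α : ℕ) (hα : 1 ≤ α) (x y : ℝ) :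
    Matrix.det (Matrix.of fun i j : Fin (α + 1) =>
        if (j : ℕ) = 0 then y ^ (i : ℕ)
        else iteratedDeriv ((j : ℕ) - 1) (fun t : ℝ => t ^ (i : ℕ)) x) =
      (∏ i ∈ Finset.range α, (i.factorial : ℝ)) * (x - y) ^ α := by
  have hM : (Matrix.of fun i j : Fin (α + 1) =>
      if (j : ℕ) = 0 then y ^ (i : ℕ)
      else iteratedDeriv ((j : ℕ) - 1) (fun t : ℝ => t ^ (i : ℕ)) x) = Vm x y α := by
    ext i j
    by_cases h : (j : ℕ) = 0
    · simp [Vm, h]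
    · simp only [Matrix.of_apply, Vm, if_neg h]
      rw [iterDeriv_pow]
  rw [hM, detVm]
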